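/- Let w1* ∈ (1/2, 1) and θ* > 0. Define, for θ ∈ ℝ and fixed w1 = w1*, H(θ) = ∫ [(w1*·e^{yθ} − w2*·e^{−yθ})/(w1*·e^{yθ} + w2*·e^{−yθ})]·y·(w1*·φ(y−θ*) + w2*·φ(y+θ*)) dy. Then for all θ ≥ θ*, 0 ≤ H'(θ) ≤ e^{−(θ*)²/2} < 1. -/

import Mathlib

open MeasureTheory Real Filter

noncomputable def gauss (x : ℝ) : ℝ := (Real.sqrt (2 * Real.pi))⁻¹ * Real.exp (-(x ^ 2) / 2)

lemma gauss_nonneg (x : ℝ) : 0 ≤ gauss x := by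
  unfold gauss; positivity

lemma gauss_continuous : Continuous gauss := by
  unfold gauss; fun_prop

lemma gauss_eq (x : ℝ) : gauss x = (Real.sqrt (2 * Real.pi))⁻¹ * Real.exp (-(1/2 : ℝ) * x ^ 2) := by
  unfold gauss; ring_nf

lemma integrable_gauss : Integrable gauss := by
  have h : (gauss : ℝ → ℝ) = fun x => (Real.sqrt (2 * Real.pi))⁻¹ * Real.exp (-(1/2 : ℝ) * x ^ 2) :=
    funext gauss_eq
  rw [h]
  exact (integrable_exp_neg_mul_sq (by norm_num : (0:ℝ) < 1/2)).const_mul _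

lemma integrable_mul_gauss : Integrable (fun x : ℝ => x * gauss x) := by
  simp_rw [gauss_eq]
  have h := (integrable_mul_exp_neg_mul_sq (by norm_num : (0:ℝ) < 1/2)).const_mul
    (Real.sqrt (2*Real.pi))⁻¹
  apply h.congr
  filter_upwards with x
  ring

lemma integrable_sq_exp : Integrable (fun x : ℝ => x ^ 2 * Real.exp (-(1/2:ℝ) * x ^ 2)) := by
  have h := integrable_rpow_mul_exp_neg_mul_sq (by norm_num : (0:ℝ) < 1/2)
    (by norm_num : (-1:ℝ) < 2)
  apply h.congr
  filter_upwards with x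
  rw [show ((2:ℝ)) = ((2:ℕ):ℝ) by norm_num, Real.rpow_natCast]

lemma integrable_sq_gauss : Integrable (fun x : ℝ => x ^ 2 * gauss x) := by
  simp_rw [gauss_eq]
  have h := integrable_sq_exp.const_mul (Real.sqrt (2*Real.pi))⁻¹
  apply h.congr
  filter_upwards with x
  ring

lemma integrable_onePlusSq_gauss_shift (a : ℝ) :
    Integrable (fun y : ℝ => (1 + y ^ 2) * gauss (y - a)) := by
  have h : Integrable (fun u : ℝ => (1 + a^2 + 2*a*u + u^2) * gauss u) := by
    have h1 := integrable_gauss.const_mul (1 + a^2)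
    have h2 := integrable_mul_gauss.const_mul (2*a)
    have h3 := integrable_sq_gauss
    apply ((h1.add h2).add h3).congr
    filter_upwards with u
    simp only [Pi.add_apply]
    ring
  have h2 := h.comp_sub_right a
  apply h2.congr
  filter_upwards with y
  ring

lemma integral_sq_exp_eq : ∫ y : ℝ, y ^ 2 * Real.exp (-(1/2:ℝ) * y ^ 2) = Real.sqrt (2 * Real.pi) := by
  have h0 : Integrable (fun y : ℝ => Real.exp (-(1/2:ℝ) * y ^ 2)) :=
    integrable_exp_neg_mul_sq (by norm_num)
  have hf : Integrable (fun y : ℝ => y ^ 2 * Real.exp (-(1/2:ℝ) * y ^ 2)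
      - Real.exp (-(1/2:ℝ) * y ^ 2)) := integrable_sq_exp.sub h0
  have hderiv : ∀ y : ℝ, HasDerivAt (fun x : ℝ => -(x * Real.exp (-(1/2:ℝ) * x ^ 2)))
      (y ^ 2 * Real.exp (-(1/2:ℝ) * y ^ 2) - Real.exp (-(1/2:ℝ) * y ^ 2)) y := by
    intro y
    have h1 : HasDerivAt (fun x : ℝ => -(1/2:ℝ) * x ^ 2) (-(1/2:ℝ) * (2 * y ^ 1)) y :=
      (hasDerivAt_pow 2 y).const_mul _
    have h2 := h1.exp
    have h3 := (hasDerivAt_id y).mul h2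
    have h4 := h3.neg
    refine h4.congr_deriv ?_
    simp only [id_eq]
    ring
  have key : ∀ R : ℝ, ∫ y in (-R)..R, (y ^ 2 * Real.exp (-(1/2:ℝ) * y ^ 2)
      - Real.exp (-(1/2:ℝ) * y ^ 2))
      = -(R * Real.exp (-(1/2:ℝ) * R ^ 2)) - -((-R) * Real.exp (-(1/2:ℝ) * (-R) ^ 2)) := by
    intro R
    exact intervalIntegral.integral_eq_sub_of_hasDerivAt (fun y _ => hderiv y)
      hf.intervalIntegrable
  have hlim1 : Tendsto (fun R : ℝ => ∫ y in (-R)..R, (y ^ 2 * Real.exp (-(1/2:ℝ) * y ^ 2)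
      - Real.exp (-(1/2:ℝ) * y ^ 2))) atTop
      (nhds (∫ y : ℝ, (y ^ 2 * Real.exp (-(1/2:ℝ) * y ^ 2) - Real.exp (-(1/2:ℝ) * y ^ 2)))) :=
    intervalIntegral_tendsto_integral hf tendsto_neg_atTop_atBot tendsto_id
  have hx : Tendsto (fun R : ℝ => R * Real.exp (-(1/2:ℝ) * R ^ 2)) atTop (nhds 0) := by
    have hg : Tendsto (fun R : ℝ => R ^ 1 * Real.exp (-R)) atTop (nhds 0) :=
      tendsto_pow_mul_exp_neg_atTop_nhds_zero 1
    apply squeeze_zero' (g := fun R : ℝ => R ^ 1 * Real.exp (-R))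
    · filter_upwards [eventually_ge_atTop (0:ℝ)] with R hR
      positivity
    · filter_upwards [eventually_ge_atTop (2:ℝ)] with R hR
      have h1 : R ≤ (1/2:ℝ) * R ^ 2 := by nlinarith
      have := Real.exp_le_exp.mpr (neg_le_neg h1)
      calc R * Real.exp (-(1/2:ℝ) * R ^ 2) ≤ R * Real.exp (-R) := by
            apply mul_le_mul_of_nonneg_left _ (by linarith)
            rw [show -(1/2:ℝ) * R ^ 2 = -(1/2 * R ^ 2) by ring]
            exact this
        _ = R ^ 1 * Real.exp (-R) := by ring
    · exact hg
  have hlim2 : Tendsto (fun R : ℝ => -(R * Real.exp (-(1/2:ℝ) * R ^ 2))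
      - -((-R) * Real.exp (-(1/2:ℝ) * (-R) ^ 2))) atTop (nhds 0) := by
    have h := (hx.neg).sub hx
    simp only [neg_zero, sub_zero, zero_sub] at h ⊢
    apply h.congr
    intro R
    ring_nf
  have hzero : ∫ y : ℝ, (y ^ 2 * Real.exp (-(1/2:ℝ) * y ^ 2) - Real.exp (-(1/2:ℝ) * y ^ 2)) = 0 := by
    apply tendsto_nhds_unique hlim1
    apply hlim2.congr
    intro R
    exact (key R).symm
  have hsub := integral_sub integrable_sq_exp h0
  rw [hsub] at hzero
  have hg : ∫ y : ℝ, Real.exp (-(1/2:ℝ) * y ^ 2) = Real.sqrt (2*Real.pi) := by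
    rw [integral_gaussian, show Real.pi / (1/2:ℝ) = 2 * Real.pi by ring]
  rw [hg] at hzero
  linarith

lemma integral_sq_gauss : ∫ y : ℝ, y ^ 2 * gauss y = 1 := by
  have h : ∀ y : ℝ, y ^ 2 * gauss y
      = (Real.sqrt (2*Real.pi))⁻¹ * (y ^ 2 * Real.exp (-(1/2:ℝ) * y ^ 2)) := by
    intro y
    rw [gauss_eq]
    ring
  simp_rw [h]
  rw [MeasureTheory.integral_const_mul, integral_sq_exp_eq, inv_mul_cancel₀ (by positivity)]

lemma keyP (w1 θs θ y : ℝ) (hw1 : 1/2 < w1) (hw1' : w1 < 1) (hθs : 0 < θs) (hθ : θs ≤ θ) :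
    4 * w1 * (1 - w1) * (w1 * Real.exp (y * θs) + (1 - w1) * Real.exp (-(y * θs))) ≤
    (w1 * Real.exp (y * θ) + (1 - w1) * Real.exp (-(y * θ))) ^ 2 := by
  have hθpos : 0 < θ := lt_of_lt_of_le hθs hθ
  have hw1pos : 0 < w1 := by linarith
  have hw2pos : 0 < 1 - w1 := by linarith
  set lam := θs / θ with hlam
  have hlam0 : 0 ≤ lam := by positivity
  have hlam1 : lam ≤ 1 := by rw [hlam, div_le_one hθpos]; exact hθ
  have hconv : ∀ z : ℝ, Real.exp (lam * z) ≤ lam * Real.exp z + (1 - lam) := by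
    intro z
    have h := convexOn_exp.2 (Set.mem_univ z) (Set.mem_univ (0:ℝ)) hlam0
      (by linarith : (0:ℝ) ≤ 1 - lam) (by ring)
    simpa [smul_eq_mul, Real.exp_zero] using h
  have h1 : Real.exp (y * θs) ≤ lam * Real.exp (y * θ) + (1 - lam) := by
    have h := hconv (y * θ)
    rw [show lam * (y * θ) = y * θs by rw [hlam]; field_simp] at h
    exact h
  have h2 : Real.exp (-(y * θs)) ≤ lam * Real.exp (-(y * θ)) + (1 - lam) := by
    have h := hconv (-(y * θ))
    rw [show lam * -(y * θ) = -(y * θs) by rw [hlam]; field_simp] at h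
    exact h
  set D := w1 * Real.exp (y * θ) + (1 - w1) * Real.exp (-(y * θ)) with hD
  set A := w1 * Real.exp (y * θs) + (1 - w1) * Real.exp (-(y * θs)) with hA
  have hDpos : 0 < D := by rw [hD]; positivity
  have hApos : 0 < A := by rw [hA]; positivity
  have hAle : A ≤ lam * D + (1 - lam) := by
    rw [hA, hD]
    nlinarith [mul_le_mul_of_nonneg_left h1 hw1pos.le,
      mul_le_mul_of_nonneg_left h2 hw2pos.le]
  have hEE : Real.exp (y * θ) * Real.exp (-(y * θ)) = 1 := by
    rw [← Real.exp_add]; simp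
  have hDsq : 4 * w1 * (1 - w1) ≤ D ^ 2 := by
    have hsq := sq_nonneg (w1 * Real.exp (y * θ) - (1 - w1) * Real.exp (-(y * θ)))
    have : D ^ 2 = (w1 * Real.exp (y * θ) - (1 - w1) * Real.exp (-(y * θ))) ^ 2
        + 4 * (w1 * (1 - w1)) * (Real.exp (y * θ) * Real.exp (-(y * θ))) := by
      rw [hD]; ring
    rw [hEE, mul_one] at this
    linarith
  have h4w : 4 * w1 * (1 - w1) ≤ 1 := by nlinarith [sq_nonneg (2 * w1 - 1)]
  rcases le_or_gt D 1 with hD1 | hD1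
  · have hA1 : A ≤ 1 := by nlinarith
    nlinarith
  · have hAD : A ≤ D := by nlinarith
    nlinarith

lemma density_eq (w1 θs y : ℝ) :
    w1 * gauss (y - θs) + (1 - w1) * gauss (y + θs)
      = Real.exp (-(θs ^ 2) / 2) *
        ((w1 * Real.exp (y * θs) + (1 - w1) * Real.exp (-(y * θs))) * gauss y) := by
  have e1 : Real.exp (-((y - θs) ^ 2) / 2)
      = Real.exp (-(θs ^ 2) / 2) * (Real.exp (y * θs) * Real.exp (-(y ^ 2) / 2)) := by
    rw [← Real.exp_add, ← Real.exp_add]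
    congr 1
    ring
  have e2 : Real.exp (-((y + θs) ^ 2) / 2)
      = Real.exp (-(θs ^ 2) / 2) * (Real.exp (-(y * θs)) * Real.exp (-(y ^ 2) / 2)) := by
    rw [← Real.exp_add, ← Real.exp_add]
    congr 1
    ring
  unfold gauss
  rw [e1, e2]
  ring

theorem stmt_9 (θs w1s : ℝ) (hθs : 0 < θs) (hw1s : w1s ∈ Set.Ioo (1/2 : ℝ) 1) :
    ∀ θ : ℝ, θs ≤ θ →
      0 ≤ deriv (fun t : ℝ => ∫ y : ℝ,
        ((w1s * Real.exp (y * t) - (1 - w1s) * Real.exp (-(y * t))) /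
          (w1s * Real.exp (y * t) + (1 - w1s) * Real.exp (-(y * t)))) * y *
        (w1s * gauss (y - θs) + (1 - w1s) * gauss (y + θs))) θ ∧
      deriv (fun t : ℝ => ∫ y : ℝ,
        ((w1s * Real.exp (y * t) - (1 - w1s) * Real.exp (-(y * t))) /
          (w1s * Real.exp (y * t) + (1 - w1s) * Real.exp (-(y * t)))) * y *
        (w1s * gauss (y - θs) + (1 - w1s) * gauss (y + θs))) θ ≤
        Real.exp (-(θs ^ 2) / 2) ∧
      Real.exp (-(θs ^ 2) / 2) < 1 := by
  obtain ⟨hw1half, hw1one⟩ := hw1s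
  have hw1pos : 0 < w1s := by linarith
  have hw2pos : 0 < 1 - w1s := by linarith
  intro θ hθ
  have hDpos : ∀ (t y : ℝ), 0 < w1s * Real.exp (y * t) + (1 - w1s) * Real.exp (-(y * t)) := by
    intro t y; positivity
  have hpnn : ∀ y : ℝ, 0 ≤ w1s * gauss (y - θs) + (1 - w1s) * gauss (y + θs) := by
    intro y
    have h1 := gauss_nonneg (y - θs)
    have h2 := gauss_nonneg (y + θs)
    positivity
  have hgc1 : Continuous fun y : ℝ => gauss (y - θs) := gauss_continuous.comp (by fun_prop)
  have hgc2 : Continuous fun y : ℝ => gauss (y + θs) := gauss_continuous.comp (by fun_prop)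
  have hpc : Continuous fun y : ℝ => w1s * gauss (y - θs) + (1 - w1s) * gauss (y + θs) :=
    (continuous_const.mul hgc1).add (continuous_const.mul hgc2)
  have hcontF : ∀ t : ℝ, Continuous fun y : ℝ =>
      ((w1s * Real.exp (y * t) - (1 - w1s) * Real.exp (-(y * t))) /
        (w1s * Real.exp (y * t) + (1 - w1s) * Real.exp (-(y * t)))) * y *
      (w1s * gauss (y - θs) + (1 - w1s) * gauss (y + θs)) := by
    intro t
    have h1 : Continuous fun y : ℝ => w1s * Real.exp (y * t) - (1 - w1s) * Real.exp (-(y * t)) := by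
      fun_prop
    have h2 : Continuous fun y : ℝ => w1s * Real.exp (y * t) + (1 - w1s) * Real.exp (-(y * t)) := by
      fun_prop
    exact ((h1.div h2 fun y => (hDpos t y).ne').mul continuous_id).mul hpc
  have hcontF' : Continuous fun y : ℝ =>
      4 * w1s * (1 - w1s) * y ^ 2 /
        (w1s * Real.exp (y * θ) + (1 - w1s) * Real.exp (-(y * θ))) ^ 2 *
      (w1s * gauss (y - θs) + (1 - w1s) * gauss (y + θs)) := by
    have h1 : Continuous fun y : ℝ => 4 * w1s * (1 - w1s) * y ^ 2 := by fun_prop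
    have h2 : Continuous fun y : ℝ =>
        (w1s * Real.exp (y * θ) + (1 - w1s) * Real.exp (-(y * θ))) ^ 2 := by fun_prop
    exact (h1.div h2 fun y => pow_ne_zero 2 (hDpos θ y).ne').mul hpc
  have hM : Integrable (fun y : ℝ =>
      (1 + y ^ 2) * (w1s * gauss (y - θs) + (1 - w1s) * gauss (y + θs))) := by
    have h1 := (integrable_onePlusSq_gauss_shift θs).const_mul w1s
    have h2 := (integrable_onePlusSq_gauss_shift (-θs)).const_mul (1 - w1s)
    apply (h1.add h2).congr
    filter_upwards with y
    simp only [Pi.add_apply, sub_neg_eq_add]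
    ring
  have hDsqge : ∀ (t y : ℝ), 4 * w1s * (1 - w1s) ≤
      (w1s * Real.exp (y * t) + (1 - w1s) * Real.exp (-(y * t))) ^ 2 := by
    intro t y
    have hEE : Real.exp (y * t) * Real.exp (-(y * t)) = 1 := by rw [← Real.exp_add]; simp
    have hexp : (w1s * Real.exp (y * t) + (1 - w1s) * Real.exp (-(y * t))) ^ 2
        = (w1s * Real.exp (y * t) - (1 - w1s) * Real.exp (-(y * t))) ^ 2
          + 4 * (w1s * (1 - w1s)) * (Real.exp (y * t) * Real.exp (-(y * t))) := by ring
    rw [hEE, mul_one] at hexp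
    nlinarith [sq_nonneg (w1s * Real.exp (y * t) - (1 - w1s) * Real.exp (-(y * t)))]
  have hyle : ∀ y : ℝ, |y| ≤ 1 + y ^ 2 := by
    intro y
    nlinarith [sq_abs y, sq_nonneg (|y| - 1), abs_nonneg y]
  have hFbound : ∀ y : ℝ,
      ‖((w1s * Real.exp (y * θ) - (1 - w1s) * Real.exp (-(y * θ))) /
          (w1s * Real.exp (y * θ) + (1 - w1s) * Real.exp (-(y * θ)))) * y *
        (w1s * gauss (y - θs) + (1 - w1s) * gauss (y + θs))‖ ≤
      (1 + y ^ 2) * (w1s * gauss (y - θs) + (1 - w1s) * gauss (y + θs)) := by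
    intro y
    have hpy := hpnn y
    have hd := hDpos θ y
    have hE1 : 0 < w1s * Real.exp (y * θ) := by positivity
    have hE2 : 0 < (1 - w1s) * Real.exp (-(y * θ)) := by positivity
    rw [Real.norm_eq_abs, abs_mul, abs_mul, abs_div]
    have hratio : |w1s * Real.exp (y * θ) - (1 - w1s) * Real.exp (-(y * θ))| /
        |w1s * Real.exp (y * θ) + (1 - w1s) * Real.exp (-(y * θ))| ≤ 1 := by
      rw [div_le_one (by rwa [abs_of_pos hd])]
      rw [abs_of_pos hd]
      rw [abs_le]
      constructor <;> linarith
    have hpabs : |w1s * gauss (y - θs) + (1 - w1s) * gauss (y + θs)|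
        = w1s * gauss (y - θs) + (1 - w1s) * gauss (y + θs) := abs_of_nonneg hpy
    rw [hpabs]
    calc |w1s * Real.exp (y * θ) - (1 - w1s) * Real.exp (-(y * θ))| /
          |w1s * Real.exp (y * θ) + (1 - w1s) * Real.exp (-(y * θ))| * |y| *
          (w1s * gauss (y - θs) + (1 - w1s) * gauss (y + θs))
        ≤ 1 * |y| * (w1s * gauss (y - θs) + (1 - w1s) * gauss (y + θs)) := by
          apply mul_le_mul_of_nonneg_right _ hpy
          exact mul_le_mul_of_nonneg_right hratio (abs_nonneg y)
      _ = |y| * (w1s * gauss (y - θs) + (1 - w1s) * gauss (y + θs)) := by ring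
      _ ≤ (1 + y ^ 2) * (w1s * gauss (y - θs) + (1 - w1s) * gauss (y + θs)) :=
          mul_le_mul_of_nonneg_right (hyle y) hpy
  have hFint : Integrable (fun y : ℝ =>
      ((w1s * Real.exp (y * θ) - (1 - w1s) * Real.exp (-(y * θ))) /
        (w1s * Real.exp (y * θ) + (1 - w1s) * Real.exp (-(y * θ)))) * y *
      (w1s * gauss (y - θs) + (1 - w1s) * gauss (y + θs))) :=
    hM.mono' (hcontF θ).aestronglyMeasurable (Filter.Eventually.of_forall hFbound)
  have hboundF' : ∀ y : ℝ, ∀ x ∈ Metric.ball θ 1,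
      ‖4 * w1s * (1 - w1s) * y ^ 2 /
          (w1s * Real.exp (y * x) + (1 - w1s) * Real.exp (-(y * x))) ^ 2 *
        (w1s * gauss (y - θs) + (1 - w1s) * gauss (y + θs))‖ ≤
      (1 + y ^ 2) * (w1s * gauss (y - θs) + (1 - w1s) * gauss (y + θs)) := by
    intro y x _
    have hpy := hpnn y
    have hd := hDpos x y
    have hnn : 0 ≤ 4 * w1s * (1 - w1s) * y ^ 2 /
        (w1s * Real.exp (y * x) + (1 - w1s) * Real.exp (-(y * x))) ^ 2 *
        (w1s * gauss (y - θs) + (1 - w1s) * gauss (y + θs)) :=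
      mul_nonneg (div_nonneg (by positivity) (by positivity)) hpy
    rw [Real.norm_eq_abs, abs_of_nonneg hnn]
    have hfr : 4 * w1s * (1 - w1s) * y ^ 2 /
        (w1s * Real.exp (y * x) + (1 - w1s) * Real.exp (-(y * x))) ^ 2 ≤ y ^ 2 := by
      rw [div_le_iff₀ (by positivity)]
      nlinarith [mul_nonneg (sq_nonneg y) (sub_nonneg.mpr (hDsqge x y))]
    calc 4 * w1s * (1 - w1s) * y ^ 2 /
          (w1s * Real.exp (y * x) + (1 - w1s) * Real.exp (-(y * x))) ^ 2 *
          (w1s * gauss (y - θs) + (1 - w1s) * gauss (y + θs))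
        ≤ y ^ 2 * (w1s * gauss (y - θs) + (1 - w1s) * gauss (y + θs)) :=
          mul_le_mul_of_nonneg_right hfr hpy
      _ ≤ (1 + y ^ 2) * (w1s * gauss (y - θs) + (1 - w1s) * gauss (y + θs)) := by
          apply mul_le_mul_of_nonneg_right _ hpy
          nlinarith
  have hdiff : ∀ y : ℝ, ∀ x ∈ Metric.ball θ 1,
      HasDerivAt (fun t : ℝ =>
        ((w1s * Real.exp (y * t) - (1 - w1s) * Real.exp (-(y * t))) /
          (w1s * Real.exp (y * t) + (1 - w1s) * Real.exp (-(y * t)))) * y *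
        (w1s * gauss (y - θs) + (1 - w1s) * gauss (y + θs)))
        (4 * w1s * (1 - w1s) * y ^ 2 /
          (w1s * Real.exp (y * x) + (1 - w1s) * Real.exp (-(y * x))) ^ 2 *
        (w1s * gauss (y - θs) + (1 - w1s) * gauss (y + θs))) x := by
    intro y x _
    have hid : HasDerivAt (fun t : ℝ => y * t) y x := by
      simpa using (hasDerivAt_id x).const_mul y
    have hE : HasDerivAt (fun t : ℝ => Real.exp (y * t)) (Real.exp (y * x) * y) x := hid.exp
    have hE' : HasDerivAt (fun t : ℝ => Real.exp (-(y * t))) (Real.exp (-(y * x)) * -y) x :=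
      hid.neg.exp
    have hN : HasDerivAt (fun t : ℝ => w1s * Real.exp (y * t) - (1 - w1s) * Real.exp (-(y * t)))
        (w1s * (Real.exp (y * x) * y) - (1 - w1s) * (Real.exp (-(y * x)) * -y)) x :=
      (hE.const_mul w1s).sub (hE'.const_mul (1 - w1s))
    have hDd : HasDerivAt (fun t : ℝ => w1s * Real.exp (y * t) + (1 - w1s) * Real.exp (-(y * t)))
        (w1s * (Real.exp (y * x) * y) + (1 - w1s) * (Real.exp (-(y * x)) * -y)) x :=
      (hE.const_mul w1s).add (hE'.const_mul (1 - w1s))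
    have hdiv := hN.div hDd (hDpos x y).ne'
    have hfinal := (hdiv.mul_const y).mul_const
      (w1s * gauss (y - θs) + (1 - w1s) * gauss (y + θs))
    refine hfinal.congr_deriv ?_
    have hEE : Real.exp (y * x) * Real.exp (-(y * x)) = 1 := by rw [← Real.exp_add]; simp
    have hnum : (w1s * (Real.exp (y * x) * y) - (1 - w1s) * (Real.exp (-(y * x)) * -y)) *
          (w1s * Real.exp (y * x) + (1 - w1s) * Real.exp (-(y * x))) -
        (w1s * Real.exp (y * x) - (1 - w1s) * Real.exp (-(y * x))) *
          (w1s * (Real.exp (y * x) * y) + (1 - w1s) * (Real.exp (-(y * x)) * -y))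
        = 4 * w1s * (1 - w1s) * y := by
      linear_combination (4 * w1s * (1 - w1s) * y) * hEE
    rw [hnum]
    ring
  obtain ⟨hF'int, hHasD⟩ := hasDerivAt_integral_of_dominated_loc_of_deriv_le
    (F := fun t y =>
      ((w1s * Real.exp (y * t) - (1 - w1s) * Real.exp (-(y * t))) /
        (w1s * Real.exp (y * t) + (1 - w1s) * Real.exp (-(y * t)))) * y *
      (w1s * gauss (y - θs) + (1 - w1s) * gauss (y + θs)))
    (F' := fun x y =>
      4 * w1s * (1 - w1s) * y ^ 2 /
        (w1s * Real.exp (y * x) + (1 - w1s) * Real.exp (-(y * x))) ^ 2 *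
      (w1s * gauss (y - θs) + (1 - w1s) * gauss (y + θs)))
    (Metric.ball_mem_nhds θ one_pos)
    (Filter.Eventually.of_forall fun x => (hcontF x).aestronglyMeasurable)
    hFint
    hcontF'.aestronglyMeasurable
    (Filter.Eventually.of_forall hboundF')
    hM
    (Filter.Eventually.of_forall hdiff)
  have hdv : deriv (fun t : ℝ => ∫ y : ℝ,
      ((w1s * Real.exp (y * t) - (1 - w1s) * Real.exp (-(y * t))) /
        (w1s * Real.exp (y * t) + (1 - w1s) * Real.exp (-(y * t)))) * y *
      (w1s * gauss (y - θs) + (1 - w1s) * gauss (y + θs))) θ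
      = ∫ y : ℝ, 4 * w1s * (1 - w1s) * y ^ 2 /
          (w1s * Real.exp (y * θ) + (1 - w1s) * Real.exp (-(y * θ))) ^ 2 *
        (w1s * gauss (y - θs) + (1 - w1s) * gauss (y + θs)) := hHasD.deriv
  refine ⟨?_, ?_, ?_⟩
  · rw [hdv]
    apply integral_nonneg
    intro y
    exact mul_nonneg (div_nonneg (by positivity) (by positivity)) (hpnn y)
  · rw [hdv]
    have hpt : ∀ y : ℝ, 4 * w1s * (1 - w1s) * y ^ 2 /
          (w1s * Real.exp (y * θ) + (1 - w1s) * Real.exp (-(y * θ))) ^ 2 *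
        (w1s * gauss (y - θs) + (1 - w1s) * gauss (y + θs))
        ≤ Real.exp (-(θs ^ 2) / 2) * (y ^ 2 * gauss y) := by
      intro y
      rw [density_eq w1s θs y]
      have hfrac : 4 * w1s * (1 - w1s) *
          (w1s * Real.exp (y * θs) + (1 - w1s) * Real.exp (-(y * θs))) /
          (w1s * Real.exp (y * θ) + (1 - w1s) * Real.exp (-(y * θ))) ^ 2 ≤ 1 :=
        (div_le_one (by positivity)).mpr (keyP w1s θs θ y hw1half hw1one hθs hθ)
      have hnn2 : 0 ≤ Real.exp (-(θs ^ 2) / 2) * (y ^ 2 * gauss y) :=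
        mul_nonneg (Real.exp_nonneg _) (mul_nonneg (sq_nonneg y) (gauss_nonneg y))
      calc 4 * w1s * (1 - w1s) * y ^ 2 /
            (w1s * Real.exp (y * θ) + (1 - w1s) * Real.exp (-(y * θ))) ^ 2 *
            (Real.exp (-(θs ^ 2) / 2) *
              ((w1s * Real.exp (y * θs) + (1 - w1s) * Real.exp (-(y * θs))) * gauss y))
          = (Real.exp (-(θs ^ 2) / 2) * (y ^ 2 * gauss y)) *
            (4 * w1s * (1 - w1s) *
              (w1s * Real.exp (y * θs) + (1 - w1s) * Real.exp (-(y * θs))) /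
              (w1s * Real.exp (y * θ) + (1 - w1s) * Real.exp (-(y * θ))) ^ 2) := by ring
        _ ≤ (Real.exp (-(θs ^ 2) / 2) * (y ^ 2 * gauss y)) * 1 :=
            mul_le_mul_of_nonneg_left hfrac hnn2
        _ = Real.exp (-(θs ^ 2) / 2) * (y ^ 2 * gauss y) := mul_one _
    calc (∫ y : ℝ, 4 * w1s * (1 - w1s) * y ^ 2 /
            (w1s * Real.exp (y * θ) + (1 - w1s) * Real.exp (-(y * θ))) ^ 2 *
          (w1s * gauss (y - θs) + (1 - w1s) * gauss (y + θs)))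
        ≤ ∫ y : ℝ, Real.exp (-(θs ^ 2) / 2) * (y ^ 2 * gauss y) :=
          integral_mono hF'int (integrable_sq_gauss.const_mul _) hpt
      _ = Real.exp (-(θs ^ 2) / 2) * ∫ y : ℝ, y ^ 2 * gauss y :=
          MeasureTheory.integral_const_mul _ _
      _ = Real.exp (-(θs ^ 2) / 2) := by rw [integral_sq_gauss, mul_one]
  · calc Real.exp (-(θs ^ 2) / 2) < Real.exp 0 := by
          apply Real.exp_lt_exp.mpr
          nlinarith
      _ = 1 := Real.exp_zero
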